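/- In an undirected graph G with positive edge weights, suppose (h = v_0, ..., v_j, v_{j+1}, ..., v_g) is a prefix of a shortest h-to-h' path and u is a neighbor of v_j with len_G(v_j,u) ≤ len_G(v_j,v_{j+1}). Then dist_G(h,u) ≤ dist_G(h,v_g). Consequently, any neighbor w of v_g lying on a shortest v_g-to-h' path satisfies dist_G(h,w) > dist_G(h,v_g), hence w cannot equal such a previously-seen vertex u unless dist values coincide contradictorily. -/

import Mathlib

open scoped ENNReal Classical

variable {V : Type*}

/-- Length of a walk (list of vertices) given edge weights `len`
(`len u v = ∞` means the edge `(u,v)` is absent). -/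
noncomputable def walkLen (len : V → V → ℝ≥0∞) : List V → ℝ≥0∞
  | [] => 0
  | [_] => 0
  | u :: v :: rest => len u v + walkLen len (v :: rest)

/-- `p` is a walk starting at `s` and ending at `t`. -/
def IsWalkFromTo (s t : V) (p : List V) : Prop :=
  p.head? = some s ∧ p.getLast? = some t

/-- Shortest-path distance: infimum of lengths of walks from `s` to `t`. -/
noncomputable def gdist (len : V → V → ℝ≥0∞) (s t : V) : ℝ≥0∞ :=
  ⨅ (p : List V) (_ : IsWalkFromTo s t p), walkLen len p

/-- `p` is a prefix of some shortest `s`-`t` path. -/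
def IsShortestPrefix (len : V → V → ℝ≥0∞) (s t : V) (p : List V) : Prop :=
  ∃ r : List V, p <+: r ∧ IsWalkFromTo s t r ∧ walkLen len r = gdist len s t

lemma walkLen_cons_cons (len : V → V → ℝ≥0∞) (u v : V) (rest : List V) :
    walkLen len (u :: v :: rest) = len u v + walkLen len (v :: rest) := rfl

lemma walkLen_append (len : V → V → ℝ≥0∞) :
    ∀ (p q : List V) (b : V), p.getLast? = some b → q.head? = some b →
      walkLen len (p ++ q.tail) = walkLen len p + walkLen len q
  | [], _, _, hp, _ => by simp at hp
  | [x], q, b, hp, hq => by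
      cases q with
      | nil => simp at hq
      | cons y t =>
        simp at hp hq
        subst hp; subst hq
        simp [walkLen]
  | x :: y :: p', q, b, hp, hq => by
      have ih := walkLen_append len (y :: p') q b (by simpa using hp) hq
      simp only [List.cons_append] at ih ⊢
      rw [walkLen_cons_cons, walkLen_cons_cons, ih, add_assoc]

lemma walkLen_le_append (len : V → V → ℝ≥0∞) :
    ∀ (p s : List V), walkLen len p ≤ walkLen len (p ++ s)
  | [], _ => zero_le
  | [_], _ => zero_le
  | x :: y :: p', s => by
      rw [List.cons_append, List.cons_append, walkLen_cons_cons, walkLen_cons_cons,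
        ← List.cons_append]
      exact add_le_add_right (walkLen_le_append len (y :: p') s) _

lemma gdist_le_walkLen (len : V → V → ℝ≥0∞) {s t : V} {p : List V}
    (hp : IsWalkFromTo s t p) : gdist len s t ≤ walkLen len p :=
  iInf₂_le p hp

lemma exists_walk_lt (len : V → V → ℝ≥0∞) {s t : V} {c : ℝ≥0∞}
    (hc : gdist len s t < c) : ∃ p, IsWalkFromTo s t p ∧ walkLen len p < c := by
  simpa [gdist, iInf_lt_iff, exists_prop] using hc

lemma walk_append {a b c : V} {p q : List V} (hp : IsWalkFromTo a b p)
    (hq : IsWalkFromTo b c q) : IsWalkFromTo a c (p ++ q.tail) := by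
  obtain ⟨hp1, hp2⟩ := hp
  obtain ⟨hq1, hq2⟩ := hq
  cases p with
  | nil => simp at hp1
  | cons x p' =>
    cases q with
    | nil => simp at hq1
    | cons y t =>
      simp at hq1; subst hq1
      constructor
      · simpa using hp1
      · cases t with
        | nil =>
          simp at hq2; subst hq2
          simpa using hp2
        | cons z t' =>
          have h3 : (z :: t').getLast? = some c := by
            simpa [List.getLast?_cons_cons] using hq2
          simp only [List.tail_cons]
          rw [List.getLast?_append, h3]
          rfl

lemma gdist_triangle (len : V → V → ℝ≥0∞) (a b c : V) :
    gdist len a c ≤ gdist len a b + gdist len b c := by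
  by_cases hab : gdist len a b = ∞
  · simp [hab]
  by_cases hbc : gdist len b c = ∞
  · simp [hbc]
  refine ENNReal.le_of_forall_pos_le_add fun ε hε _ => ?_
  have hδ : ((ε : ℝ≥0∞) / 2) ≠ 0 := by
    simp [ENNReal.div_eq_zero_iff, hε.ne']
  obtain ⟨p, hp, hplt⟩ := exists_walk_lt len (ENNReal.lt_add_right hab hδ)
  obtain ⟨q, hq, hqlt⟩ := exists_walk_lt len (ENNReal.lt_add_right hbc hδ)
  calc gdist len a c ≤ walkLen len (p ++ q.tail) :=
        gdist_le_walkLen len (walk_append hp hq)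
    _ = walkLen len p + walkLen len q := walkLen_append len p q b hp.2 hq.1
    _ ≤ (gdist len a b + (ε : ℝ≥0∞)/2) + (gdist len b c + (ε : ℝ≥0∞)/2) :=
        add_le_add hplt.le hqlt.le
    _ = gdist len a b + gdist len b c + ε := by
        rw [add_add_add_comm, ENNReal.add_halves]

lemma prefix_split (len : V → V → ℝ≥0∞) {h hh : V} {p : List V}
    (hp : IsShortestPrefix len h hh p) {vg : V} (hlast : p.getLast? = some vg)
    (hfin : gdist len h hh ≠ ∞) :
    p.head? = some h ∧ walkLen len p = gdist len h vg ∧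
      gdist len h vg + gdist len vg hh = gdist len h hh := by
  obtain ⟨r, ⟨s, rfl⟩, ⟨hr1, hr2⟩, hrlen⟩ := hp
  have hpne : p ≠ [] := by rintro rfl; simp at hlast
  have hhead : p.head? = some h := by
    cases p with
    | nil => exact absurd rfl hpne
    | cons x t => simpa using hr1
  have hq : IsWalkFromTo vg hh (vg :: s) := by
    refine ⟨rfl, ?_⟩
    cases s with
    | nil =>
      simp only [List.append_nil] at hr2
      rw [hlast] at hr2
      simpa using hr2
    | cons z s' =>
      have h3 : (z :: s').getLast? = some hh := by
        rw [List.getLast?_append] at hr2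
        cases h4 : (z :: s').getLast? with
        | none => simp at h4
        | some w => rw [h4] at hr2; simpa using hr2
      simpa [List.getLast?_cons_cons] using h3
  have hsum : walkLen len (p ++ s) = walkLen len p + walkLen len (vg :: s) :=
    walkLen_append len p (vg :: s) vg hlast rfl
  have hA : gdist len h vg ≤ walkLen len p := gdist_le_walkLen len ⟨hhead, hlast⟩
  have hB : gdist len vg hh ≤ walkLen len (vg :: s) := gdist_le_walkLen len hq
  have tri := gdist_triangle len h vg hh
  have hEq : gdist len h vg + gdist len vg hh = gdist len h hh := by
    refine le_antisymm ?_ tri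
    calc gdist len h vg + gdist len vg hh ≤ walkLen len p + walkLen len (vg :: s) :=
          add_le_add hA hB
      _ = walkLen len (p ++ s) := hsum.symm
      _ = gdist len h hh := hrlen
  have hqfin : walkLen len (vg :: s) ≠ ∞ := by
    intro hx
    apply hfin
    rw [← hrlen, hsum, hx, add_top]
  have hle : walkLen len p ≤ gdist len h vg := by
    have h1 : walkLen len p + walkLen len (vg :: s) ≤
        gdist len h vg + walkLen len (vg :: s) := by
      rw [← hsum, hrlen]
      calc gdist len h hh ≤ gdist len h vg + gdist len vg hh := tri
        _ ≤ gdist len h vg + walkLen len (vg :: s) := add_le_add_right hB _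
    exact (ENNReal.add_le_add_iff_right hqfin).mp h1
  exact ⟨hhead, le_antisymm hle hA, hEq⟩

/-- undirected scan invariant. If `p = (h = v_0, …, v_g)` is a
prefix of a shortest `h`-`h'` path and `u` is a neighbor of `v_j` scanned no
later than `v_{j+1}` (i.e. `len(v_j,u) ≤ len(v_j,v_{j+1})`), then
`dist(h,u) ≤ dist(h,v_g)`; moreover every neighbor `w` of `v_g` lying on a
shortest `v_g`-`h'` path has `dist(h,w) > dist(h,v_g)`. -/
theorem stmt_10 [Fintype V] (len : V → V → ℝ≥0∞)
    (hsymm : ∀ u v, len u v = len v u) (hpos : ∀ u v, 0 < len u v)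
    (h h' : V) (hfin : gdist len h h' ≠ ∞)
    (p : List V) (hp : IsShortestPrefix len h h' p)
    (vg : V) (hlast : p.getLast? = some vg)
    (j : ℕ) (hj : j + 1 < p.length) (u : V)
    (hedge : len (p.get ⟨j, by omega⟩) u ≠ ∞)
    (hle : len (p.get ⟨j, by omega⟩) u ≤
      len (p.get ⟨j, by omega⟩) (p.get ⟨j+1, hj⟩)) :
    gdist len h u ≤ gdist len h vg ∧
      ∀ w, len vg w ≠ ∞ → len vg w + gdist len w h' = gdist len vg h' →
        gdist len h vg < gdist len h w := by
  obtain ⟨hhead, hwp, hsplit⟩ := prefix_split len hp hlast hfin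
  have hjlt : j < p.length := by omega
  set vj := p.get ⟨j, hjlt⟩ with hvj
  set vj1 := p.get ⟨j+1, hj⟩ with hvj1
  -- facts about takes
  have hvj' : vj = p[j] := List.get_eq_getElem
  have htake1 : (p.take (j+1)).getLast? = some vj := by
    rw [List.getLast?_take, hvj']
    simp [List.getElem?_eq_getElem hjlt]
  have htake2 : p.take (j+2) = p.take (j+1) ++ [vj1] := by
    have := List.take_concat_get hj
    rw [show j+2 = (j+1)+1 from rfl, ← this, hvj1]
    simp [List.concat_eq_append, List.get_eq_getElem]
  have hheadt : (p.take (j+1)).head? = some h := by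
    rw [List.head?_take]
    simp [hhead]
  constructor
  · -- first part
    have w1 : IsWalkFromTo h u (p.take (j+1) ++ [u]) := by
      have := walk_append (a := h) (b := vj) (c := u)
        ⟨hheadt, htake1⟩ (q := [vj, u]) ⟨rfl, by simp⟩
      simpa using this
    have e1 : walkLen len (p.take (j+1) ++ [u]) =
        walkLen len (p.take (j+1)) + len vj u := by
      have := walkLen_append len (p.take (j+1)) [vj, u] vj htake1 rfl
      simpa [walkLen] using this
    have e2 : walkLen len (p.take (j+2)) =
        walkLen len (p.take (j+1)) + len vj vj1 := by
      have := walkLen_append len (p.take (j+1)) [vj, vj1] vj htake1 rfl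
      rw [htake2]
      simpa [walkLen] using this
    calc gdist len h u ≤ walkLen len (p.take (j+1) ++ [u]) := gdist_le_walkLen len w1
      _ = walkLen len (p.take (j+1)) + len vj u := e1
      _ ≤ walkLen len (p.take (j+1)) + len vj vj1 := add_le_add_right hle _
      _ = walkLen len (p.take (j+2)) := e2.symm
      _ ≤ walkLen len p := by
          conv_rhs => rw [← List.take_append_drop (j+2) p]
          exact walkLen_le_append len _ _
      _ = gdist len h vg := hwp
  · -- second part
    intro w hw1 hw2
    have hABfin : gdist len h vg + gdist len vg h' ≠ ∞ := by rw [hsplit]; exact hfin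
    obtain ⟨hAfin, hBfin⟩ := ENNReal.add_ne_top.mp hABfin
    have hwfin : gdist len w h' ≠ ∞ := by
      intro hx
      apply hBfin
      rw [← hw2, hx, add_top]
    have tri2 := gdist_triangle len h w h'
    have key : gdist len h vg + len vg w + gdist len w h' ≤
        gdist len h w + gdist len w h' := by
      rw [add_assoc, hw2, hsplit]
      exact tri2
    have h5 : gdist len h vg + len vg w ≤ gdist len h w :=
      (ENNReal.add_le_add_iff_right hwfin).mp key
    exact lt_of_lt_of_le (ENNReal.lt_add_right hAfin (hpos vg w).ne') h5
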